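/- For integers 1 ≤ j < i ≤ n, the polynomial g_{i,j}(x_1,...,x_n) := ∑_{k=1}^{j} ∏_{ℓ=j+1}^{i} (x_k - x_ℓ) satisfies the recursion g_{i,j} = g_{i-1,j-1} + (x_j - x_i) g_{i-1,j}, where by convention g_{m,0} := 0 for all m and empty products equal 1. -/
import Mathlib


open MvPolynomial

/-- The variable `x_m` (1-indexed) in `ℚ[x_1,…,x_n]`. -/
noncomputable def xv (n : ℕ) (m : ℕ) : MvPolynomial (Fin n) ℚ :=
  if h : m - 1 < n then X ⟨m - 1, h⟩ else 0

/-- `f_{i,j} = ∑_{k=1}^{j} (∏_{ℓ=j+1}^{i} (x_k - x_ℓ)) x_k`. -/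
noncomputable def fpoly (n i j : ℕ) : MvPolynomial (Fin n) ℚ :=
  ∑ k ∈ Finset.Icc 1 j, (∏ l ∈ Finset.Icc (j+1) i, (xv n k - xv n l)) * xv n k

/-- `g_{i,j} = ∑_{k=1}^{j} ∏_{ℓ=j+1}^{i} (x_k - x_ℓ)`. -/
noncomputable def gpoly (n i j : ℕ) : MvPolynomial (Fin n) ℚ :=
  ∑ k ∈ Finset.Icc 1 j, ∏ l ∈ Finset.Icc (j+1) i, (xv n k - xv n l)

/-- `h` is a Hessenberg function on `{1,…,n}`. -/
def IsHessenberg (n : ℕ) (h : ℕ → ℕ) : Prop :=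
  (∀ i, 1 ≤ i → i ≤ n → i ≤ h i ∧ h i ≤ n) ∧
  (∀ i, 1 ≤ i → i < n → h i ≤ h (i + 1))

theorem gpoly_recursion (n i j : ℕ) (hj : 1 ≤ j) (hji : j < i) (hin : i ≤ n) :
    gpoly n i j = gpoly n (i - 1) (j - 1) + (xv n j - xv n i) * gpoly n (i - 1) j := by
  obtain ⟨i, rfl⟩ : ∃ i', i = i' + 1 := ⟨i - 1, by omega⟩
  obtain ⟨j, rfl⟩ : ∃ j', j = j' + 1 := ⟨j - 1, by omega⟩
  have hji' : j + 1 ≤ i := by omega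
  simp only [Nat.add_sub_cancel, gpoly]
  -- split the top of each product over Icc (j+2) (i+1)
  have hprodtop : ∀ k, ∏ l ∈ Finset.Icc (j + 1 + 1) (i + 1), (xv n k - xv n l)
      = (∏ l ∈ Finset.Icc (j + 1 + 1) i, (xv n k - xv n l)) * (xv n k - xv n (i + 1)) := by
    intro k
    exact Finset.prod_Icc_succ_top (by omega) _
  -- split the bottom of products over Icc (j+1) i
  have hprodbot : ∀ k, ∏ l ∈ Finset.Icc (j + 1) i, (xv n k - xv n l)
      = (xv n k - xv n (j + 1)) * ∏ l ∈ Finset.Icc (j + 1 + 1) i, (xv n k - xv n l) := by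
    intro k
    rw [← Finset.Ioc_insert_left hji', Finset.prod_insert (by simp),
      ← Finset.Icc_add_one_left_eq_Ioc]
  -- split the top of the sum over Icc 1 (j+1)
  rw [Finset.sum_Icc_succ_top (by omega), Finset.sum_Icc_succ_top (by omega)]
  simp only [hprodtop, hprodbot, Finset.mul_sum]
  have key : ∀ a b c p : MvPolynomial (Fin n) ℚ,
      p * (a - c) = (a - b) * p + (b - c) * p := by intros; ring
  rw [Finset.sum_congr rfl fun k _ =>
    key (xv n k) (xv n (j + 1)) (xv n (i + 1)) _, Finset.sum_add_distrib, ← Finset.mul_sum]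
  ring
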